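/- (Example 8.1, Donsker–Varadhan form) Let P° ∈ K(Δ°) be irreducible (for every x,y there is k ∈ ℕ with (P°)^k(x,y) > 0), let G(m) = P° for all m ∈ P(Δ°), and let A be the adjacency matrix with A(x,y) = 1 if and only if P°(x,y) > 0 (so A ∈ 𝒜 and A is irreducible). Let I be the rate function associated with A. Then for every m ∈ P(Δ°), I(m) = tilde I(m), where tilde I(m) = inf { R(γ ‖ m ⊗ P°) : γ ∈ P(Δ°×Δ°) with both marginals equal to m } and (m ⊗ P°)(x,y) = m(x) P°(x,y). -/

import Mathlib

open MeasureTheory Filter Set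
open scoped ENNReal NNReal

noncomputable section

/-- The probability simplex `P(Δ°)`, identified with the standard simplex in `ℝ^d`. -/
def PD (d : ℕ) : Set (Fin d → ℝ) := stdSimplex ℝ (Fin d)

/-- ℓ¹ norm on `ℝ^d`. -/
def l1 {d : ℕ} (v : Fin d → ℝ) : ℝ := ∑ x, |v x|

/-- Transition probability kernels on `Δ°` (row-stochastic matrices). -/
def IsKernel {d : ℕ} (K : Matrix (Fin d) (Fin d) ℝ) : Prop :=
  ∀ x, (∀ y, 0 ≤ K x y) ∧ (∑ y, K x y) = 1

/-- Adjacency matrix: entries are 0 or 1. -/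
def IsAdjacency {d : ℕ} (A : Matrix (Fin d) (Fin d) ℝ) : Prop :=
  ∀ x y, A x y = 0 ∨ A x y = 1

/-- Irreducible adjacency matrix: for each `x, y` some positive power has positive `(x,y)` entry. -/
def IsIrreducibleAdj {d : ℕ} (A : Matrix (Fin d) (Fin d) ℝ) : Prop :=
  IsAdjacency A ∧ ∀ x y, ∃ k : ℕ, 0 < (A ^ (k + 1)) x y

/-- `A ∈ 𝒜`: `A` is an adjacency matrix and `A x y = 0` forces `G m x y = 0` on the simplex. -/
def MemA {d : ℕ} (G : (Fin d → ℝ) → Matrix (Fin d) (Fin d) ℝ)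
    (A : Matrix (Fin d) (Fin d) ℝ) : Prop :=
  IsAdjacency A ∧ ∀ x y, A x y = 0 → ∀ m ∈ PD d, G m x y = 0

open Classical in
/-- Relative entropy `R(ν ‖ μ)` of probability vectors on a finite type, valued in `ℝ≥0∞`. -/
def relEnt {S : Type*} [Fintype S] (ν μ : S → ℝ) : ℝ≥0∞ :=
  if ∀ s, μ s = 0 → ν s = 0 then ENNReal.ofReal (∑ s, ν s * Real.log (ν s / μ s)) else ⊤

/-- `η ∈ U(m)` together with the (unique) solution `M` of the equation (P3). -/
structure Admissible {d : ℕ} (A : Matrix (Fin d) (Fin d) ℝ)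
    (G : (Fin d → ℝ) → Matrix (Fin d) (Fin d) ℝ) (m : Fin d → ℝ)
    (η : ℝ → Fin d → Fin d → ℝ) (M : ℝ → Fin d → ℝ) : Prop where
  meas : ∀ x y, Measurable fun s => η s x y
  prob : ∀ s, 0 ≤ s → (∀ x y, 0 ≤ η s x y) ∧ (∑ x, ∑ y, η s x y) = 1
  p1 : ∀ x y, A x y = 0 → ∀ t, 0 ≤ t → (∫ s in (0:ℝ)..t, η s x y) = 0
  p2 : ∀ᵐ s ∂(volume.restrict (Ici (0:ℝ))), ∀ x, (∑ y, η s x y) = ∑ y, η s y x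
  contM : Continuous M
  sol : ∀ t, 0 ≤ t → ∀ x,
    M t x = m x - (∫ s in (0:ℝ)..t, ∑ y, η s x y) + ∫ s in (0:ℝ)..t, M s x
  memM : ∀ t, 0 ≤ t → M t ∈ PD d
  exT : ∃ T : ℝ → Fin d → Fin d → ℝ, Continuous T ∧
    (∀ s t, 0 ≤ s → 0 ≤ t → (∑ x, ∑ y, |T t x y - T s x y|) ≤ 2 * |t - s|) ∧
    ∀ t, 0 ≤ t →
      (∀ x y, 0 ≤ T t x y) ∧ (∀ x, (∑ y, T t x y) = M t x) ∧
      (∀ y, (∑ x, T t x y) = M t y) ∧ (∀ x y, A x y = 0 → T t x y = 0)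

/-- The discounted relative-entropy cost of a control `η` with associated trajectory `M`. -/
def cost {d : ℕ} (G : (Fin d → ℝ) → Matrix (Fin d) (Fin d) ℝ)
    (η : ℝ → Fin d → Fin d → ℝ) (M : ℝ → Fin d → ℝ) : ℝ≥0∞ :=
  ∫⁻ s in Ici (0:ℝ), ENNReal.ofReal (Real.exp (-s)) *
    relEnt (fun xy : Fin d × Fin d => η s xy.1 xy.2)
      (fun xy : Fin d × Fin d => (∑ y, η s xy.1 y) * G (M s) xy.1 xy.2)

/-- The rate function `I` associated with the adjacency matrix `A`. -/
def rateI {d : ℕ} (A : Matrix (Fin d) (Fin d) ℝ)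
    (G : (Fin d → ℝ) → Matrix (Fin d) (Fin d) ℝ) (m : Fin d → ℝ) : ℝ≥0∞ :=
  ⨅ (η : ℝ → Fin d → Fin d → ℝ) (M : ℝ → Fin d → ℝ) (_ : Admissible A G m η M),
    cost G η M

/-- Extended-real logarithm of an extended nonnegative real. -/
def elog (x : ℝ≥0∞) : EReal :=
  if x = 0 then ⊥ else if x = ⊤ then ⊤ else ((Real.log x.toReal : ℝ) : EReal)

/-- Assumption L (Lipschitz continuity), together with the standing requirement that
`G` maps the simplex into transition kernels. -/
def AssumptionL {d : ℕ} (G : (Fin d → ℝ) → Matrix (Fin d) (Fin d) ℝ) : Prop :=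
  (∀ m ∈ PD d, IsKernel (G m)) ∧
  ∃ LG : ℝ, 0 < LG ∧ ∀ m ∈ PD d, ∀ m' ∈ PD d,
    (∑ x, ∑ y, |G m x y - G m' x y|) ≤ LG * l1 (fun x => m x - m' x)

/-- `tilde I(m) = inf { R(γ ‖ m ⊗ G(m)) : γ has both marginals equal to m }`. -/
def tildeI {d : ℕ} (G : (Fin d → ℝ) → Matrix (Fin d) (Fin d) ℝ) (m : Fin d → ℝ) : ℝ≥0∞ :=
  ⨅ (γ : Fin d → Fin d → ℝ)
    (_ : (∀ x y, 0 ≤ γ x y) ∧ (∀ x, (∑ y, γ x y) = m x) ∧ (∀ y, (∑ x, γ x y) = m y)),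
    relEnt (fun xy : Fin d × Fin d => γ xy.1 xy.2)
      (fun xy : Fin d × Fin d => m xy.1 * G m xy.1 xy.2)
open scoped Topology

open Classical in
def psiE (p q : ℝ) : ℝ≥0∞ :=
  if 0 < p ∧ q ≤ 0 then ⊤ else ENNReal.ofReal (p * Real.log (p / q) - p + q)

lemma linear_le_psiE (p q t : ℝ) (hp : 0 ≤ p) (hq : 0 ≤ q) :
    ENNReal.ofReal (p * t - q * (Real.exp t - 1)) ≤ psiE p q := by
  unfold psiE
  by_cases h : 0 < p ∧ q ≤ 0
  · rw [if_pos h]; exact le_top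
  · rw [if_neg h]
    apply ENNReal.ofReal_le_ofReal
    rcases eq_or_lt_of_le hp with h0 | h0
    · rw [← h0]
      simp only [zero_mul, zero_sub, zero_div, zero_add, sub_zero, neg_le]
      nlinarith [Real.exp_pos t, hq]
    · have hq0 : 0 < q := by push_neg at h; exact h h0
      have hpq : 0 < p / q := div_pos h0 hq0
      have key := Real.add_one_le_exp (t - Real.log (p / q))
      have hexp : Real.exp (t - Real.log (p / q)) = Real.exp t * (q / p) := by
        rw [Real.exp_sub, Real.exp_log hpq]
        field_simp
      rw [hexp] at key
      have h2 := mul_le_mul_of_nonneg_left key h0.le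
      have hpe : p * (Real.exp t * (q / p)) = Real.exp t * q := by
        field_simp
      rw [hpe] at h2
      nlinarith [h2]

lemma relEnt_eq_sum_psiE {S : Type*} [Fintype S] {ν μ : S → ℝ}
    (hν : ∀ s, 0 ≤ ν s) (hμ : ∀ s, 0 ≤ μ s) (hsum : ∑ s, ν s = ∑ s, μ s) :
    relEnt ν μ = ∑ s, psiE (ν s) (μ s) := by
  classical
  unfold relEnt psiE
  by_cases hac : ∀ s, μ s = 0 → ν s = 0
  · rw [if_pos hac]
    have hcond : ∀ s : S, ¬(0 < ν s ∧ μ s ≤ 0) := by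
      intro s hs
      have hμ0 : μ s = 0 := le_antisymm hs.2 (hμ s)
      have := hac s hμ0
      linarith [hs.1]
    have hψnn : ∀ s : S, 0 ≤ ν s * Real.log (ν s / μ s) - ν s + μ s := by
      intro s
      rcases eq_or_lt_of_le (hν s) with h0 | h0
      · rw [← h0]; simp [hμ s]
      · have hμs : 0 < μ s := by
          rcases eq_or_lt_of_le (hμ s) with h1 | h1
          · exact absurd (hac s h1.symm) (by linarith)
          · exact h1
        have hlog := Real.log_le_sub_one_of_pos (div_pos hμs h0)
        have hmul : ν s * (μ s / ν s) = μ s := by field_simp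
        have h4 : ν s * Real.log (μ s / ν s) ≤ μ s - ν s := by
          have := mul_le_mul_of_nonneg_left hlog h0.le
          rw [mul_sub, hmul, mul_one] at this
          linarith
        have h5 : Real.log (ν s / μ s) = -Real.log (μ s / ν s) := by
          rw [← Real.log_inv]
          congr 1
          field_simp
        rw [h5]
        nlinarith [h4]
    calc ENNReal.ofReal (∑ s, ν s * Real.log (ν s / μ s))
        = ENNReal.ofReal (∑ s, (ν s * Real.log (ν s / μ s) - ν s + μ s)) := by
          congr 1
          rw [Finset.sum_add_distrib, Finset.sum_sub_distrib, hsum]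
          ring
      _ = ∑ s, ENNReal.ofReal (ν s * Real.log (ν s / μ s) - ν s + μ s) :=
          ENNReal.ofReal_sum_of_nonneg (fun s _ => hψnn s)
      _ = ∑ s, if 0 < ν s ∧ μ s ≤ 0 then (⊤ : ℝ≥0∞)
            else ENNReal.ofReal (ν s * Real.log (ν s / μ s) - ν s + μ s) := by
          exact Finset.sum_congr rfl (fun s _ => (if_neg (hcond s)).symm)
  · rw [if_neg hac]
    push_neg at hac
    obtain ⟨s, hμs, hνs⟩ := hac
    exact (ENNReal.sum_eq_top.mpr
      ⟨s, Finset.mem_univ s, if_pos ⟨lt_of_le_of_ne (hν s) (Ne.symm hνs), le_of_eq hμs⟩⟩).symm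

lemma measurable_psiE {p q : ℝ → ℝ} (hp : Measurable p) (hq : Measurable q) :
    Measurable fun s => psiE (p s) (q s) := by
  unfold psiE
  apply Measurable.ite
  · exact (measurableSet_lt measurable_const hp).inter (measurableSet_le hq measurable_const)
  · exact measurable_const
  · exact ENNReal.measurable_ofReal.comp
      (((hp.mul (Real.measurable_log.comp (hp.div hq))).sub hp).add hq)

lemma ofReal_integral_le_lintegral_ofReal' {α : Type*} [MeasurableSpace α] {μ : Measure α}
    {f : α → ℝ} (hf : Integrable f μ) :
    ENNReal.ofReal (∫ a, f a ∂μ) ≤ ∫⁻ a, ENNReal.ofReal (f a) ∂μ := by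
  have hmax : ∀ x : ℝ, ENNReal.ofReal (max x 0) = ENNReal.ofReal x := by
    intro x
    rcases le_total x 0 with h | h
    · rw [max_eq_right h, ENNReal.ofReal_zero, ENNReal.ofReal_eq_zero.mpr h]
    · rw [max_eq_left h]
  calc ENNReal.ofReal (∫ a, f a ∂μ) ≤ ENNReal.ofReal (∫ a, max (f a) 0 ∂μ) :=
        ENNReal.ofReal_le_ofReal (integral_mono hf hf.pos_part (fun a => le_max_left _ _))
    _ = ∫⁻ a, ENNReal.ofReal (max (f a) 0) ∂μ :=
        ofReal_integral_eq_lintegral_ofReal hf.pos_part (ae_of_all _ fun a => le_max_right _ _)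
    _ = ∫⁻ a, ENNReal.ofReal (f a) ∂μ := by simp_rw [hmax]

lemma integrableOn_exp_neg_Ici : IntegrableOn (fun s : ℝ => Real.exp (-s)) (Ici (0:ℝ)) := by
  rw [integrableOn_Ici_iff_integrableOn_Ioi]
  simpa using exp_neg_integrableOn_Ioi (0:ℝ) (one_pos)

lemma integrable_exp_mul {p : ℝ → ℝ} (hp : Measurable p)
    (hb : ∀ s ∈ Ici (0:ℝ), |p s| ≤ 1) :
    IntegrableOn (fun s => Real.exp (-s) * p s) (Ici (0:ℝ)) := by
  refine Integrable.mono' integrableOn_exp_neg_Ici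
    ((Real.measurable_exp.comp measurable_neg).mul hp).aestronglyMeasurable ?_
  filter_upwards [ae_restrict_mem measurableSet_Ici] with s hs
  rw [Real.norm_eq_abs, abs_mul, abs_of_pos (Real.exp_pos _)]
  nlinarith [Real.exp_pos (-s), hb s hs, abs_nonneg (p s)]

lemma integrableOn_Ioc_of_bound {h : ℝ → ℝ} (hm : Measurable h) {T C : ℝ}
    (hb : ∀ s ∈ Ioc (0:ℝ) T, |h s| ≤ C) : IntegrableOn h (Ioc (0:ℝ) T) := by
  haveI : IsFiniteMeasure (volume.restrict (Ioc (0:ℝ) T)) :=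
    ⟨by rw [Measure.restrict_apply_univ]; exact measure_Ioc_lt_top⟩
  refine Integrable.mono' (integrable_const C) hm.aestronglyMeasurable ?_
  filter_upwards [ae_restrict_mem measurableSet_Ioc] with s hs using hb s hs

lemma integral_exp_neg_Ioc {u T : ℝ} (h : u ≤ T) :
    ∫ s in Ioc u T, Real.exp (-s) = Real.exp (-u) - Real.exp (-T) := by
  rw [← intervalIntegral.integral_of_le h]
  have hder : ∀ s ∈ Set.uIcc u T, HasDerivAt (fun x => -Real.exp (-x)) (Real.exp (-s)) s := by
    intro s _
    exact (((Real.hasDerivAt_exp (-s)).comp s (hasDerivAt_neg s)).neg).congr_deriv (by simp)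
  rw [intervalIntegral.integral_eq_sub_of_hasDerivAt hder
    ((Real.continuous_exp.comp continuous_neg).intervalIntegrable _ _)]
  ring

lemma fub {f : ℝ → ℝ} (hf : Measurable f) (hb : ∀ s ∈ Ici (0:ℝ), |f s| ≤ 1)
    {T : ℝ} (hT : 0 ≤ T) :
    ∫ s in Ioc (0:ℝ) T, Real.exp (-s) * ∫ u in Ioc (0:ℝ) s, f u
      = ∫ u in Ioc (0:ℝ) T, (Real.exp (-u) - Real.exp (-T)) * f u := by
  set μT := volume.restrict (Ioc (0:ℝ) T) with hμT
  haveI : IsFiniteMeasure μT :=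
    ⟨by rw [hμT, Measure.restrict_apply_univ]; exact measure_Ioc_lt_top⟩
  set F : ℝ × ℝ → ℝ := fun p => Real.exp (-p.1) * if p.2 ≤ p.1 then f p.2 else 0 with hF
  have hFmeas : Measurable F := by
    apply ((Real.measurable_exp.comp (measurable_neg.comp measurable_fst))).mul
    exact Measurable.ite (measurableSet_le measurable_snd measurable_fst)
      (hf.comp measurable_snd) measurable_const
  have hFint : Integrable F (μT.prod μT) := by
    refine Integrable.mono' (integrable_const 1) hFmeas.aestronglyMeasurable ?_
    rw [hμT, Measure.prod_restrict]
    filter_upwards [ae_restrict_mem (measurableSet_Ioc.prod measurableSet_Ioc)] with p hp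
    obtain ⟨hp1, hp2⟩ := hp
    rw [Real.norm_eq_abs, abs_mul, abs_of_pos (Real.exp_pos _)]
    have h1 : Real.exp (-p.1) ≤ 1 := by
      rw [Real.exp_le_one_iff]; linarith [hp1.1]
    have h2 : |if p.2 ≤ p.1 then f p.2 else 0| ≤ 1 := by
      split
      · exact hb p.2 (le_of_lt hp2.1)
      · simp
    nlinarith [abs_nonneg (if p.2 ≤ p.1 then f p.2 else 0), Real.exp_pos (-p.1)]
  have swap := integral_integral_swap (f := fun s u => F (s, u)) hFint
  have hL : ∫ s, (∫ u, F (s, u) ∂μT) ∂μT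
      = ∫ s in Ioc (0:ℝ) T, Real.exp (-s) * ∫ u in Ioc (0:ℝ) s, f u := by
    rw [hμT]
    refine setIntegral_congr_fun measurableSet_Ioc (fun s hs => ?_)
    have hfun : (fun u => F (s, u)) = fun u => Real.exp (-s) * (if u ≤ s then f u else 0) := rfl
    rw [hfun, integral_const_mul]
    congr 1
    have hind : (fun u => if u ≤ s then f u else 0) = (Iic s).indicator f := by
      funext u; simp [Set.indicator_apply, Set.mem_Iic]
    rw [hind, setIntegral_indicator measurableSet_Iic]
    have hset2 : Ioc 0 T ∩ Iic s = Ioc 0 s := by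
      ext u
      simp only [Set.mem_inter_iff, Set.mem_Iic, Set.mem_Ioc]
      exact ⟨fun h => ⟨h.1.1, h.2⟩, fun h => ⟨⟨h.1, h.2.trans hs.2⟩, h.2⟩⟩
    rw [hset2]
  have hR : ∫ u, (∫ s, F (s, u) ∂μT) ∂μT
      = ∫ u in Ioc (0:ℝ) T, (Real.exp (-u) - Real.exp (-T)) * f u := by
    rw [hμT]
    refine setIntegral_congr_fun measurableSet_Ioc (fun u hu => ?_)
    have hind : (fun s => F (s, u)) = (Ici u).indicator (fun s => Real.exp (-s) * f u) := by
      funext s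
      simp only [hF, Set.indicator_apply, Set.mem_Ici]
      split <;> simp_all
    rw [hind, setIntegral_indicator measurableSet_Ici]
    have hset : Ioc 0 T ∩ Ici u = Icc u T := by
      ext s
      simp only [Set.mem_inter_iff, Set.mem_Ici, Set.mem_Ioc, Set.mem_Icc]
      exact ⟨fun h => ⟨h.2, h.1.2⟩, fun h => ⟨⟨lt_of_lt_of_le hu.1 h.1, h.2⟩, h.1⟩⟩
    rw [hset, integral_Icc_eq_integral_Ioc, integral_mul_const, integral_exp_neg_Ioc hu.2]
  rw [← hL, swap, hR]

lemma key_ode {a g : ℝ → ℝ} (ham : Measurable a)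
    (ha : ∀ s ∈ Ici (0:ℝ), 0 ≤ a s ∧ a s ≤ 1) (hgc : Continuous g)
    (hg : ∀ s ∈ Ici (0:ℝ), 0 ≤ g s ∧ g s ≤ 1) {c : ℝ}
    (hsol : ∀ t, 0 ≤ t → g t = c - (∫ s in (0:ℝ)..t, a s) + ∫ s in (0:ℝ)..t, g s)
    {T : ℝ} (hT : 0 ≤ T) :
    ∫ u in Ioc (0:ℝ) T, Real.exp (-u) * a u = c - Real.exp (-T) * g T := by
  set f : ℝ → ℝ := fun u => g u - a u with hf
  have hfm : Measurable f := hgc.measurable.sub ham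
  have hfb : ∀ s ∈ Ici (0:ℝ), |f s| ≤ 1 := by
    intro s hs
    obtain ⟨h1, h2⟩ := ha s hs
    obtain ⟨h3, h4⟩ := hg s hs
    rw [abs_le]; constructor <;> simp only [hf] <;> nlinarith
  -- integrability facts on Ioc 0 T
  have hIa : IntegrableOn (fun u => Real.exp (-u) * a u) (Ioc (0:ℝ) T) := by
    refine integrableOn_Ioc_of_bound (measurable_neg.exp.mul ham) (C := 1) ?_
    intro s hs
    obtain ⟨h1, h2⟩ := ha s hs.1.le
    show |Real.exp (-s) * a s| ≤ 1
    rw [abs_mul, abs_of_pos (Real.exp_pos _), abs_of_nonneg h1]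
    have : Real.exp (-s) ≤ 1 := by rw [Real.exp_le_one_iff]; linarith [hs.1]
    nlinarith [Real.exp_pos (-s)]
  have hIg : IntegrableOn (fun u => Real.exp (-u) * g u) (Ioc (0:ℝ) T) :=
    ((Real.continuous_exp.comp continuous_neg).mul hgc).integrableOn_Ioc
  have hJa : IntegrableOn a (Ioc (0:ℝ) T) := by
    refine integrableOn_Ioc_of_bound ham (C := 1) ?_
    intro s hs
    obtain ⟨h1, h2⟩ := ha s hs.1.le
    rw [abs_of_nonneg h1]; exact h2
  have hJg : IntegrableOn g (Ioc (0:ℝ) T) := hgc.integrableOn_Ioc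
  -- pointwise identity for the Fubini integrand
  have hfint : ∀ s, 0 ≤ s → ∫ u in Ioc (0:ℝ) s, f u = g s - c := by
    intro s h0s
    have hai : IntervalIntegrable a volume 0 s := by
      rw [intervalIntegrable_iff_integrableOn_Ioc_of_le h0s]
      refine integrableOn_Ioc_of_bound ham (C := 1) ?_
      intro u hu
      obtain ⟨h1, h2⟩ := ha u hu.1.le
      rw [abs_of_nonneg h1]; exact h2
    have hgi : IntervalIntegrable g volume 0 s := hgc.intervalIntegrable _ _
    have : ∫ u in Ioc (0:ℝ) s, f u = (∫ u in (0:ℝ)..s, g u) - ∫ u in (0:ℝ)..s, a u := by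
      rw [← intervalIntegral.integral_of_le h0s, intervalIntegral.integral_sub hgi hai]
    rw [this]
    linarith [hsol s h0s]
  -- left side of Fubini equals IG - c(1 - e^{-T})
  have hLcong : ∫ s in Ioc (0:ℝ) T, Real.exp (-s) * ∫ u in Ioc (0:ℝ) s, f u
      = ∫ s in Ioc (0:ℝ) T, (Real.exp (-s) * g s - Real.exp (-s) * c) := by
    refine setIntegral_congr_fun measurableSet_Ioc (fun s hs => ?_)
    rw [hfint s hs.1.le]
    ring
  have hL2 : ∫ s in Ioc (0:ℝ) T, (Real.exp (-s) * g s - Real.exp (-s) * c)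
      = (∫ s in Ioc (0:ℝ) T, Real.exp (-s) * g s) - (1 - Real.exp (-T)) * c := by
    rw [integral_sub hIg (by exact ((Real.continuous_exp.comp continuous_neg).mul continuous_const).integrableOn_Ioc)]
    congr 1
    rw [integral_mul_const, integral_exp_neg_Ioc hT]
    simp
  -- right side of Fubini expands
  have hexpand : ∫ u in Ioc (0:ℝ) T, (Real.exp (-u) - Real.exp (-T)) * f u
      = ((∫ u in Ioc (0:ℝ) T, Real.exp (-u) * g u) - ∫ u in Ioc (0:ℝ) T, Real.exp (-u) * a u)
        - Real.exp (-T) * ((∫ u in Ioc (0:ℝ) T, g u) - ∫ u in Ioc (0:ℝ) T, a u) := by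
    have hfun : (fun u => (Real.exp (-u) - Real.exp (-T)) * f u)
        = fun u => (Real.exp (-u) * g u - Real.exp (-u) * a u)
            - (Real.exp (-T) * g u - Real.exp (-T) * a u) := by
      funext u; simp only [hf]; ring
    have i1 : IntegrableOn (fun u => Real.exp (-u) * g u - Real.exp (-u) * a u) (Ioc (0:ℝ) T) :=
      hIg.sub hIa
    have i2 : IntegrableOn (fun u => Real.exp (-T) * g u - Real.exp (-T) * a u) (Ioc (0:ℝ) T) :=
      (hJg.const_mul _).sub (hJa.const_mul _)
    rw [hfun, integral_sub i1 i2, integral_sub hIg hIa,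
      integral_sub (hJg.const_mul _) (hJa.const_mul _), integral_const_mul, integral_const_mul]
    ring
  have hJfT : (∫ u in Ioc (0:ℝ) T, g u) - ∫ u in Ioc (0:ℝ) T, a u = g T - c := by
    have := hfint T hT
    rw [hf] at this
    rw [← integral_sub hJg hJa] at *
    exact this
  have hfub := fub hfm hfb hT
  rw [hLcong, hL2] at hfub
  rw [hexpand, hJfT] at hfub
  linarith [hfub]

lemma discounted_integral_eq {a g : ℝ → ℝ} (ham : Measurable a)
    (ha : ∀ s ∈ Ici (0:ℝ), 0 ≤ a s ∧ a s ≤ 1) (hgc : Continuous g)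
    (hg : ∀ s ∈ Ici (0:ℝ), 0 ≤ g s ∧ g s ≤ 1) {c : ℝ}
    (hsol : ∀ t, 0 ≤ t → g t = c - (∫ s in (0:ℝ)..t, a s) + ∫ s in (0:ℝ)..t, g s) :
    ∫ s in Ici (0:ℝ), Real.exp (-s) * a s = c := by
  have hInt : IntegrableOn (fun s => Real.exp (-s) * a s) (Ici (0:ℝ)) := by
    refine integrable_exp_mul ham (fun s hs => ?_)
    obtain ⟨h1, h2⟩ := ha s hs
    rw [abs_of_nonneg h1]; exact h2
  have hIoi : IntegrableOn (fun s => Real.exp (-s) * a s) (Ioi (0:ℝ)) :=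
    hInt.mono_set Ioi_subset_Ici_self
  have t1 : Tendsto (fun T => ∫ u in (0:ℝ)..T, Real.exp (-u) * a u) atTop
      (𝓝 (∫ u in Ioi (0:ℝ), Real.exp (-u) * a u)) :=
    intervalIntegral_tendsto_integral_Ioi 0 hIoi tendsto_id
  have heq : (fun T => ∫ u in (0:ℝ)..T, Real.exp (-u) * a u)
      =ᶠ[atTop] fun T => c - Real.exp (-T) * g T := by
    filter_upwards [eventually_ge_atTop (0:ℝ)] with T hT
    rw [intervalIntegral.integral_of_le hT]
    exact key_ode ham ha hgc hg hsol hT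
  have t2 : Tendsto (fun T : ℝ => c - Real.exp (-T) * g T) atTop (𝓝 c) := by
    have h0 : Tendsto (fun T : ℝ => Real.exp (-T) * g T) atTop (𝓝 0) := by
      refine squeeze_zero_norm' ?_
        (Real.tendsto_exp_atBot.comp (tendsto_neg_atTop_atBot : Tendsto (fun T : ℝ => -T) atTop atBot))
      filter_upwards [eventually_ge_atTop (0:ℝ)] with T hT
      rw [Real.norm_eq_abs, abs_mul, abs_of_pos (Real.exp_pos _)]
      obtain ⟨h1, h2⟩ := hg T hT
      rw [abs_of_nonneg h1]
      simp only [Function.comp]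
      nlinarith [Real.exp_pos (-T)]
    simpa using tendsto_const_nhds.sub h0
  have : ∫ u in Ioi (0:ℝ), Real.exp (-u) * a u = c :=
    tendsto_nhds_unique (t1.congr' heq) t2
  rw [integral_Ici_eq_integral_Ioi, this]

lemma lintegral_exp_neg_Ici : ∫⁻ s in Ici (0:ℝ), ENNReal.ofReal (Real.exp (-s)) = 1 := by
  rw [← ofReal_integral_eq_lintegral_ofReal integrableOn_exp_neg_Ici
    (ae_of_all _ fun s => (Real.exp_pos _).le)]
  rw [integral_Ici_eq_integral_Ioi, integral_exp_neg_Ioi_zero, ENNReal.ofReal_one]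

lemma jensen_psiE {p q : ℝ → ℝ} (hpm : Measurable p) (hqm : Measurable q)
    (hp : ∀ s ∈ Ici (0:ℝ), 0 ≤ p s ∧ p s ≤ 1) (hq : ∀ s ∈ Ici (0:ℝ), 0 ≤ q s ∧ q s ≤ 1) :
    psiE (∫ s in Ici (0:ℝ), Real.exp (-s) * p s) (∫ s in Ici (0:ℝ), Real.exp (-s) * q s) ≤
      ∫⁻ s in Ici (0:ℝ), ENNReal.ofReal (Real.exp (-s)) * psiE (p s) (q s) := by
  set μr := volume.restrict (Ici (0:ℝ)) with hμr
  have hae : ∀ᵐ s ∂μr, s ∈ Ici (0:ℝ) := ae_restrict_mem measurableSet_Ici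
  have hpi : IntegrableOn (fun s => Real.exp (-s) * p s) (Ici (0:ℝ)) :=
    integrable_exp_mul hpm (fun s hs => by
      obtain ⟨h1, h2⟩ := hp s hs; rw [abs_of_nonneg h1]; exact h2)
  have hqi : IntegrableOn (fun s => Real.exp (-s) * q s) (Ici (0:ℝ)) :=
    integrable_exp_mul hqm (fun s hs => by
      obtain ⟨h1, h2⟩ := hq s hs; rw [abs_of_nonneg h1]; exact h2)
  set P := ∫ s in Ici (0:ℝ), Real.exp (-s) * p s with hPdef
  set Q := ∫ s in Ici (0:ℝ), Real.exp (-s) * q s with hQdef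
  have hP0 : 0 ≤ P := by
    refine setIntegral_nonneg measurableSet_Ici (fun s hs => ?_)
    exact mul_nonneg (Real.exp_pos _).le (hp s hs).1
  have hQ0 : 0 ≤ Q := by
    refine setIntegral_nonneg measurableSet_Ici (fun s hs => ?_)
    exact mul_nonneg (Real.exp_pos _).le (hq s hs).1
  -- key linear lower bound, for every t
  have key : ∀ t : ℝ, ENNReal.ofReal (P * t - Q * (Real.exp t - 1)) ≤
      ∫⁻ s in Ici (0:ℝ), ENNReal.ofReal (Real.exp (-s)) * psiE (p s) (q s) := by
    intro t
    have hint : Integrable (fun s => Real.exp (-s) * p s * t - Real.exp (-s) * q s * (Real.exp t - 1)) μr :=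
      (hpi.mul_const t).sub (hqi.mul_const _)
    have h1 : ∫ s, (Real.exp (-s) * p s * t - Real.exp (-s) * q s * (Real.exp t - 1)) ∂μr
        = P * t - Q * (Real.exp t - 1) := by
      rw [integral_sub (hpi.mul_const t) (hqi.mul_const _), integral_mul_const, integral_mul_const]
    rw [← h1]
    refine le_trans (ofReal_integral_le_lintegral_ofReal' hint) (lintegral_mono_ae ?_)
    filter_upwards [hae] with s hs
    have hrw : Real.exp (-s) * p s * t - Real.exp (-s) * q s * (Real.exp t - 1)
        = Real.exp (-s) * (p s * t - q s * (Real.exp t - 1)) := by ring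
    rw [hrw, ENNReal.ofReal_mul (Real.exp_pos (-s)).le]
    exact mul_le_mul_right (linear_le_psiE _ _ t (hp s hs).1 (hq s hs).1) _
  by_cases hPpos : 0 < P
  · by_cases hQpos : 0 < Q
    · have ht := key (Real.log (P / Q))
      have hPQ : 0 < P / Q := div_pos hPpos hQpos
      have hexp : Real.exp (Real.log (P / Q)) = P / Q := Real.exp_log hPQ
      have harg : P * Real.log (P / Q) - Q * (Real.exp (Real.log (P / Q)) - 1)
          = P * Real.log (P / Q) - P + Q := by
        rw [hexp]
        have : Q * (P / Q) = P := by field_simp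
        nlinarith [this]
      rw [harg] at ht
      have : psiE P Q = ENNReal.ofReal (P * Real.log (P / Q) - P + Q) := by
        unfold psiE
        rw [if_neg (by push_neg; intro _; linarith)]
      rw [this]
      exact ht
    · -- Q = 0, P > 0 : right side is infinite
      have hQz : Q = 0 := le_antisymm (not_lt.mp hQpos) hQ0
      have hq0 : ∀ᵐ s ∂μr, q s = 0 := by
        have hz : (fun s => Real.exp (-s) * q s) =ᵐ[μr] 0 :=
          (integral_eq_zero_iff_of_nonneg_ae
            (by filter_upwards [hae] with s hs
                exact mul_nonneg (Real.exp_pos _).le (hq s hs).1) hqi).mp hQz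
        filter_upwards [hz] with s hs
        have := mul_eq_zero.mp hs
        rcases this with h | h
        · exact absurd h (Real.exp_pos _).ne'
        · exact h
      set E : Set ℝ := {s | 0 < p s} with hE
      have hEm : MeasurableSet E := measurableSet_lt measurable_const hpm
      have hEpos : μr E ≠ 0 := by
        intro hEz
        have hple : ∀ᵐ s ∂μr, ¬ 0 < p s := by
          rw [ae_iff]
          simpa [hE] using hEz
        have hp0 : (fun s => Real.exp (-s) * p s) =ᵐ[μr] 0 := by
          filter_upwards [hple, hae] with s hs hsI
          have : p s = 0 := le_antisymm (not_lt.mp hs) (hp s hsI).1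
          simp [this]
        have : P = 0 := by
          rw [hPdef, integral_congr_ae hp0]
          simp
        linarith
      have h1 : ∫⁻ s, ENNReal.ofReal (Real.exp (-s)) * psiE (p s) (q s) ∂(μr.restrict E) = ⊤ := by
        have hcong : ∀ᵐ s ∂(μr.restrict E),
            ENNReal.ofReal (Real.exp (-s)) * psiE (p s) (q s) = ⊤ := by
          filter_upwards [ae_restrict_mem hEm,
            hq0.filter_mono (ae_mono Measure.restrict_le_self)] with s hsE hsq
          have hpsi : psiE (p s) (q s) = ⊤ := by
            unfold psiE
            rw [if_pos ⟨hsE, le_of_eq hsq⟩]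
          rw [hpsi, ENNReal.mul_top (ENNReal.ofReal_pos.mpr (Real.exp_pos _)).ne']
        rw [lintegral_congr_ae hcong, lintegral_const, Measure.restrict_apply_univ]
        exact ENNReal.top_mul hEpos
      refine le_trans le_top (le_of_eq ?_)
      refine (top_le_iff.mp ?_).symm
      rw [← h1]
      exact lintegral_mono' Measure.restrict_le_self le_rfl
  · -- P = 0
    have hPz : P = 0 := le_antisymm (not_lt.mp hPpos) hP0
    have hp0 : ∀ᵐ s ∂μr, p s = 0 := by
      have hz : (fun s => Real.exp (-s) * p s) =ᵐ[μr] 0 :=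
        (integral_eq_zero_iff_of_nonneg_ae
          (by filter_upwards [hae] with s hs
              exact mul_nonneg (Real.exp_pos _).le (hp s hs).1) hpi).mp hPz
      filter_upwards [hz] with s hs
      rcases mul_eq_zero.mp hs with h | h
      · exact absurd h (Real.exp_pos _).ne'
      · exact h
    have hLHS : psiE P Q = ENNReal.ofReal Q := by
      rw [hPz]
      unfold psiE
      rw [if_neg (by intro h; exact lt_irrefl 0 h.1)]
      norm_num
    have hRHS : ∫⁻ s in Ici (0:ℝ), ENNReal.ofReal (Real.exp (-s)) * psiE (p s) (q s)
        = ENNReal.ofReal Q := by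
      have hcong : ∀ᵐ s ∂μr, ENNReal.ofReal (Real.exp (-s)) * psiE (p s) (q s)
          = ENNReal.ofReal (Real.exp (-s) * q s) := by
        filter_upwards [hp0, hae] with s hs hsI
        have hpsi : psiE (p s) (q s) = ENNReal.ofReal (q s) := by
          rw [hs]
          unfold psiE
          rw [if_neg (by intro h; exact lt_irrefl 0 h.1)]
          norm_num
        rw [hpsi, ← ENNReal.ofReal_mul (Real.exp_pos (-s)).le]
      rw [lintegral_congr_ae hcong,
        ← ofReal_integral_eq_lintegral_ofReal hqi
          (by filter_upwards [hae] with s hs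
              exact mul_nonneg (Real.exp_pos _).le (hq s hs).1)]
    rw [hLHS, hRHS]

/-- **(Example 8.1, Donsker–Varadhan form.)** If `G(m) = P°` for an irreducible transition
kernel `P°`, and `A` is the adjacency matrix of `P°`, then the rate function associated with
`A` equals the classical Donsker–Varadhan rate function `tilde I`. -/
theorem rateI_eq_donsker_varadhan {d : ℕ} [NeZero d]
    (P₀ : Matrix (Fin d) (Fin d) ℝ) (hP : IsKernel P₀)
    (hirr : ∀ x y, ∃ k : ℕ, 0 < (P₀ ^ (k + 1)) x y)
    (A : Matrix (Fin d) (Fin d) ℝ)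
    (hA : ∀ x y, A x y = if 0 < P₀ x y then 1 else 0)
    (m : Fin d → ℝ) (hm : m ∈ PD d) :
    rateI A (fun _ => P₀) m = tildeI (fun _ => P₀) m := by
  have hm' := hm
  obtain ⟨hm0, hm1⟩ : (∀ x, 0 ≤ m x) ∧ ∑ x, m x = 1 := hm'
  have hP0 : ∀ x y, 0 ≤ P₀ x y := fun x y => (hP x).1 y
  have hP1 : ∀ x, ∑ y, P₀ x y = 1 := fun x => (hP x).2
  have hPle1 : ∀ x y, P₀ x y ≤ 1 := by
    intro x y
    calc P₀ x y ≤ ∑ y', P₀ x y' :=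
          Finset.single_le_sum (fun i _ => hP0 x i) (Finset.mem_univ y)
      _ = 1 := hP1 x
  have hA0 : ∀ x y, A x y = 0 → P₀ x y = 0 := by
    intro x y h
    rw [hA x y] at h
    by_contra hne
    rw [if_pos (lt_of_le_of_ne (hP0 x y) (Ne.symm hne))] at h
    exact one_ne_zero h
  apply le_antisymm
  · -- rateI ≤ tildeI
    simp only [tildeI]
    refine le_iInf fun γ => le_iInf fun hγ => ?_
    obtain ⟨hγ0, hγrow, hγcol⟩ := hγ
    by_cases hac : ∀ xy : Fin d × Fin d, m xy.1 * P₀ xy.1 xy.2 = 0 → γ xy.1 xy.2 = 0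
    swap
    · simp only [relEnt]
      rw [if_neg hac]
      exact le_top
    have hγA : ∀ x y, A x y = 0 → γ x y = 0 := by
      intro x y h
      exact hac (x, y) (by rw [hA0 x y h, mul_zero])
    have hγsum : ∑ x, ∑ y, γ x y = 1 := by
      rw [Finset.sum_congr rfl (fun x _ => hγrow x)]
      exact hm1
    have hAdm : Admissible A (fun _ => P₀) m (fun _ => γ) (fun _ => m) := by
      constructor
      · intro x y; exact measurable_const
      · intro s _; exact ⟨hγ0, hγsum⟩
      · intro x y h t _
        simp [hγA x y h]
      · exact ae_of_all _ (fun s x => by rw [hγrow x, hγcol x])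
      · exact continuous_const
      · intro t _ x
        simp only [hγrow x]
        rw [intervalIntegral.integral_const, smul_eq_mul]
        ring
      · intro t _; exact hm
      · refine ⟨fun _ => γ, continuous_const, ?_, ?_⟩
        · intro s t _ _
          simp
        · intro t _
          exact ⟨hγ0, hγrow, hγcol, fun x y h => hγA x y h⟩
    have hrel : relEnt (fun xy : Fin d × Fin d => γ xy.1 xy.2)
        (fun xy : Fin d × Fin d => (∑ y, γ xy.1 y) * P₀ xy.1 xy.2)
        = relEnt (fun xy : Fin d × Fin d => γ xy.1 xy.2)
          (fun xy : Fin d × Fin d => m xy.1 * P₀ xy.1 xy.2) := by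
      congr 1
      funext xy
      rw [hγrow]
    have hcost : cost (fun _ => P₀) (fun _ => γ) (fun _ => m)
        = relEnt (fun xy : Fin d × Fin d => γ xy.1 xy.2)
          (fun xy : Fin d × Fin d => m xy.1 * P₀ xy.1 xy.2) := by
      simp only [cost]
      simp only [hrel]
      rw [lintegral_mul_const _ (measurable_neg.exp.ennreal_ofReal),
        lintegral_exp_neg_Ici, one_mul]
    have hle : rateI A (fun _ => P₀) m ≤ cost (fun _ => P₀) (fun _ => γ) (fun _ => m) := by
      simp only [rateI]
      exact iInf_le_of_le _ (iInf_le_of_le _ (iInf_le_of_le hAdm le_rfl))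
    rw [hcost] at hle
    exact hle
  · -- tildeI ≤ rateI
    simp only [rateI]
    refine le_iInf fun η => le_iInf fun M => le_iInf fun hAdm => ?_
    have hη0 : ∀ s ∈ Ici (0:ℝ), ∀ x y, 0 ≤ η s x y := fun s hs => (hAdm.prob s hs).1
    have hηsum : ∀ s ∈ Ici (0:ℝ), ∑ x, ∑ y, η s x y = 1 := fun s hs => (hAdm.prob s hs).2
    have hrow0 : ∀ s ∈ Ici (0:ℝ), ∀ x, 0 ≤ ∑ y, η s x y :=
      fun s hs x => Finset.sum_nonneg (fun y _ => hη0 s hs x y)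
    have hrowle : ∀ s ∈ Ici (0:ℝ), ∀ x, (∑ y, η s x y) ≤ 1 := by
      intro s hs x
      calc (∑ y, η s x y) ≤ ∑ x', ∑ y, η s x' y :=
            Finset.single_le_sum (f := fun x' => ∑ y, η s x' y)
              (fun x' _ => hrow0 s hs x') (Finset.mem_univ x)
        _ = 1 := hηsum s hs
    have hηle : ∀ s ∈ Ici (0:ℝ), ∀ x y, η s x y ≤ 1 := by
      intro s hs x y
      calc η s x y ≤ ∑ y', η s x y' :=
            Finset.single_le_sum (fun y' _ => hη0 s hs x y') (Finset.mem_univ y)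
        _ ≤ 1 := hrowle s hs x
    have hrowmeas : ∀ x, Measurable fun s => ∑ y, η s x y :=
      fun x => Finset.measurable_sum _ (fun y _ => hAdm.meas x y)
    have rowint : ∀ x, ∫ s in Ici (0:ℝ), Real.exp (-s) * (∑ y, η s x y) = m x := by
      intro x
      refine discounted_integral_eq (hrowmeas x)
        (fun s hs => ⟨hrow0 s hs x, hrowle s hs x⟩)
        ((continuous_apply x).comp hAdm.contM)
        (fun t ht => ?_) (fun t ht => hAdm.sol t ht x)
      obtain ⟨hM0, hM1⟩ : (∀ z, 0 ≤ M t z) ∧ ∑ z, M t z = 1 := hAdm.memM t ht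
      refine ⟨hM0 x, ?_⟩
      calc M t x ≤ ∑ z, M t z := Finset.single_le_sum (fun z _ => hM0 z) (Finset.mem_univ x)
        _ = 1 := hM1
    set γ : Fin d → Fin d → ℝ := fun x y => ∫ s in Ici (0:ℝ), Real.exp (-s) * η s x y with hγdef
    have hint : ∀ x y, IntegrableOn (fun s => Real.exp (-s) * η s x y) (Ici (0:ℝ)) := by
      intro x y
      refine integrable_exp_mul (hAdm.meas x y) (fun s hs => ?_)
      rw [abs_of_nonneg (hη0 s hs x y)]
      exact hηle s hs x y
    have hγ0 : ∀ x y, 0 ≤ γ x y := by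
      intro x y
      refine setIntegral_nonneg measurableSet_Ici (fun s hs => ?_)
      exact mul_nonneg (Real.exp_pos _).le (hη0 s hs x y)
    have hγrow : ∀ x, (∑ y, γ x y) = m x := by
      intro x
      calc (∑ y, γ x y) = ∫ s in Ici (0:ℝ), ∑ y, Real.exp (-s) * η s x y :=
            (integral_finset_sum Finset.univ (fun y _ => hint x y)).symm
        _ = ∫ s in Ici (0:ℝ), Real.exp (-s) * (∑ y, η s x y) := by
            simp_rw [Finset.mul_sum]
        _ = m x := rowint x
    have hγcol : ∀ y, (∑ x, γ x y) = m y := by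
      intro y
      calc (∑ x, γ x y) = ∫ s in Ici (0:ℝ), ∑ x, Real.exp (-s) * η s x y :=
            (integral_finset_sum Finset.univ (fun x _ => hint x y)).symm
        _ = ∫ s in Ici (0:ℝ), Real.exp (-s) * (∑ x, η s x y) := by
            simp_rw [Finset.mul_sum]
        _ = ∫ s in Ici (0:ℝ), Real.exp (-s) * (∑ y', η s y y') := by
            refine integral_congr_ae ?_
            filter_upwards [hAdm.p2] with s hs
            rw [← hs y]
        _ = m y := rowint y
    have hstep1 : tildeI (fun _ => P₀) m ≤
        relEnt (fun xy : Fin d × Fin d => γ xy.1 xy.2)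
          (fun xy : Fin d × Fin d => m xy.1 * P₀ xy.1 xy.2) := by
      simp only [tildeI]
      exact iInf_le_of_le γ (iInf_le_of_le ⟨hγ0, hγrow, hγcol⟩ le_rfl)
    have hstep2 : relEnt (fun xy : Fin d × Fin d => γ xy.1 xy.2)
        (fun xy : Fin d × Fin d => m xy.1 * P₀ xy.1 xy.2)
        = ∑ xy : Fin d × Fin d, psiE (γ xy.1 xy.2) (m xy.1 * P₀ xy.1 xy.2) := by
      refine relEnt_eq_sum_psiE (fun xy => hγ0 xy.1 xy.2)
        (fun xy => mul_nonneg (hm0 xy.1) (hP0 xy.1 xy.2)) ?_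
      rw [Fintype.sum_prod_type, Fintype.sum_prod_type]
      rw [Finset.sum_congr rfl (fun x _ => hγrow x)]
      have : ∀ x : Fin d, ∑ y, m x * P₀ x y = m x := by
        intro x
        rw [← Finset.mul_sum, hP1, mul_one]
      rw [Finset.sum_congr rfl (fun x _ => this x)]
    have hmeasq : ∀ x y : Fin d, Measurable fun s => (∑ y', η s x y') * P₀ x y :=
      fun x y => (hrowmeas x).mul measurable_const
    have hstep3 : ∀ xy : Fin d × Fin d,
        psiE (γ xy.1 xy.2) (m xy.1 * P₀ xy.1 xy.2) ≤
          ∫⁻ s in Ici (0:ℝ), ENNReal.ofReal (Real.exp (-s)) *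
            psiE (η s xy.1 xy.2) ((∑ y, η s xy.1 y) * P₀ xy.1 xy.2) := by
      rintro ⟨x, y⟩
      have hqint : ∫ s in Ici (0:ℝ), Real.exp (-s) * ((∑ y', η s x y') * P₀ x y)
          = m x * P₀ x y := by
        have h1 : (fun s => Real.exp (-s) * ((∑ y', η s x y') * P₀ x y))
            = fun s => (Real.exp (-s) * (∑ y', η s x y')) * P₀ x y := by
          funext s; ring
        rw [h1, integral_mul_const, rowint x]
      have := jensen_psiE (hAdm.meas x y) (hmeasq x y)
        (fun s hs => ⟨hη0 s hs x y, hηle s hs x y⟩)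
        (fun s hs => ⟨mul_nonneg (hrow0 s hs x) (hP0 x y), ?_⟩)
      · rw [hqint] at this
        exact this
      · have h1 := hrowle s hs x
        have h2 := hrow0 s hs x
        nlinarith [hP0 x y, hPle1 x y]
    have hcost_eq : cost (fun _ => P₀) η M
        = ∑ xy : Fin d × Fin d, ∫⁻ s in Ici (0:ℝ), ENNReal.ofReal (Real.exp (-s)) *
            psiE (η s xy.1 xy.2) ((∑ y, η s xy.1 y) * P₀ xy.1 xy.2) := by
      simp only [cost]
      rw [lintegral_congr_ae (g := fun s => ∑ xy : Fin d × Fin d,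
          ENNReal.ofReal (Real.exp (-s)) *
            psiE (η s xy.1 xy.2) ((∑ y, η s xy.1 y) * P₀ xy.1 xy.2)) ?_]
      · exact lintegral_finset_sum _ (fun xy _ =>
          (measurable_neg.exp.ennreal_ofReal).mul
            (measurable_psiE (hAdm.meas xy.1 xy.2) (hmeasq xy.1 xy.2)))
      · filter_upwards [ae_restrict_mem measurableSet_Ici] with s hs
        have hrel : relEnt (fun xy : Fin d × Fin d => η s xy.1 xy.2)
            (fun xy : Fin d × Fin d => (∑ y, η s xy.1 y) * P₀ xy.1 xy.2)
            = ∑ xy : Fin d × Fin d,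
              psiE (η s xy.1 xy.2) ((∑ y, η s xy.1 y) * P₀ xy.1 xy.2) := by
          refine relEnt_eq_sum_psiE (fun xy => hη0 s hs xy.1 xy.2)
            (fun xy => mul_nonneg (hrow0 s hs xy.1) (hP0 xy.1 xy.2)) ?_
          rw [Fintype.sum_prod_type, Fintype.sum_prod_type]
          rw [hηsum s hs]
          have : ∀ x : Fin d, ∑ y, (∑ y', η s x y') * P₀ x y = ∑ y', η s x y' := by
            intro x
            rw [← Finset.mul_sum, hP1, mul_one]
          rw [Finset.sum_congr rfl (fun x _ => this x), hηsum s hs]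
        rw [hrel, Finset.mul_sum]
    calc tildeI (fun _ => P₀) m
        ≤ relEnt (fun xy : Fin d × Fin d => γ xy.1 xy.2)
            (fun xy : Fin d × Fin d => m xy.1 * P₀ xy.1 xy.2) := hstep1
      _ = ∑ xy : Fin d × Fin d, psiE (γ xy.1 xy.2) (m xy.1 * P₀ xy.1 xy.2) := hstep2
      _ ≤ ∑ xy : Fin d × Fin d, ∫⁻ s in Ici (0:ℝ), ENNReal.ofReal (Real.exp (-s)) *
            psiE (η s xy.1 xy.2) ((∑ y, η s xy.1 y) * P₀ xy.1 xy.2) :=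
          Finset.sum_le_sum (fun xy _ => hstep3 xy)
      _ = cost (fun _ => P₀) η M := hcost_eq.symm

end
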